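/- With the notation of the minimal-rank theorem: if C is a connected component of D = {x ∈ ℝ^n : rank A(x) ≤ r(A)} with C ∩ S ≠ ∅, then every x ∈ C satisfies rank A(x) = r(A), i.e., C is disjoint from {x : rank A(x) ≤ r(A) - 1}. -/

import Mathlib

section Aux
open Matrix Polynomial

lemma det_add_smul_one {m : ℕ} {M : Matrix (Fin m) (Fin m) ℝ} (hM : M.IsHermitian) (t : ℝ) :
    (M + t • 1).det = ∏ i, (hM.eigenvalues i + t) := by
  have hU : (hM.eigenvectorUnitary : Matrix (Fin m) (Fin m) ℝ) *
      star (hM.eigenvectorUnitary : Matrix (Fin m) (Fin m) ℝ) = 1 :=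
    (Matrix.mem_unitaryGroup_iff).mp hM.eigenvectorUnitary.2
  have h1 : M + t • 1 =
      (hM.eigenvectorUnitary : Matrix (Fin m) (Fin m) ℝ) *
        Matrix.diagonal (fun i => hM.eigenvalues i + t) *
        star (hM.eigenvectorUnitary : Matrix (Fin m) (Fin m) ℝ) := by
    have h3 : Matrix.diagonal (fun i => hM.eigenvalues i + t)
        = Matrix.diagonal (RCLike.ofReal ∘ hM.eigenvalues) + t • (1 : Matrix (Fin m) (Fin m) ℝ) := by
      ext i j
      by_cases h : i = j <;>
        simp [Matrix.diagonal_apply, Matrix.one_apply, h]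
    rw [h3, Matrix.mul_add, Matrix.add_mul]
    conv_lhs => rw [hM.spectral_theorem, Unitary.conjStarAlgAut_apply]
    congr 1
    rw [Matrix.mul_smul, Matrix.mul_one, Matrix.smul_mul, hU]
  rw [h1, Matrix.det_mul_right_comm, hU, Matrix.one_mul, Matrix.det_diagonal]

lemma charP_monic {m : ℕ} (ev : Fin m → ℝ) :
    (∏ i, (X + C (ev i))).Monic :=
  monic_prod_of_monic _ _ fun i _ => monic_X_add_C _

lemma charP_natDegree {m : ℕ} (ev : Fin m → ℝ) :
    (∏ i, (X + C (ev i))).natDegree = m := by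
  rw [natDegree_prod_of_monic _ _ fun i _ => monic_X_add_C _]
  simp [natDegree_X_add_C]

lemma coeff_eq_sum_det {m : ℕ} {M : Matrix (Fin m) (Fin m) ℝ} (hM : M.IsHermitian) (k : ℕ) :
    (∏ i, (X + C (hM.eigenvalues i))).coeff k
      = ∑ j ∈ Finset.range (m+1),
          (M + (j:ℝ) • 1).det *
            (Lagrange.basis (Finset.range (m+1)) (fun j : ℕ => (j:ℝ)) j).coeff k := by
  have hinj : Set.InjOn (fun j : ℕ => (j:ℝ)) (Finset.range (m+1)) :=
    fun a _ b _ h => Nat.cast_injective h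
  have hdeg : (∏ i : Fin m, (X + C (hM.eigenvalues i))).degree < ((Finset.range (m+1)).card : WithBot ℕ) := by
    rw [Finset.card_range]
    refine lt_of_le_of_lt degree_le_natDegree ?_
    rw [charP_natDegree]
    exact_mod_cast Nat.lt_succ_self m
  conv_lhs => rw [Lagrange.eq_interpolate hinj hdeg]
  rw [Lagrange.interpolate_apply, Polynomial.finset_sum_coeff]
  refine Finset.sum_congr rfl fun j hj => ?_
  rw [Polynomial.coeff_C_mul]
  congr 1
  rw [eval_prod, det_add_smul_one hM]
  exact Finset.prod_congr rfl fun i _ => by simp [add_comm]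

lemma charP_coeff_zero {m r : ℕ} {M : Matrix (Fin m) (Fin m) ℝ} (hM : M.IsHermitian)
    (hrank : M.rank ≤ r) {k : ℕ} (hk : k < m - r) :
    (∏ i, (X + C (hM.eigenvalues i))).coeff k = 0 := by
  have hkm : k ≤ m := le_of_lt (lt_of_lt_of_le hk (Nat.sub_le _ _))
  rw [Finset.prod_X_add_C_coeff _ _ (by simpa using hkm)]
  refine Finset.sum_eq_zero fun t ht => ?_
  rw [Finset.mem_powersetCard] at ht
  have htc : t.card = m - k := by simpa using ht.2
  have hnz : (Finset.univ.filter fun i => hM.eigenvalues i ≠ 0).card ≤ r := by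
    have := hM.rank_eq_card_non_zero_eigs
    rw [Fintype.card_subtype] at this
    omega
  obtain ⟨i, hit, hi0⟩ : ∃ i ∈ t, hM.eigenvalues i = 0 := by
    by_contra hc
    push_neg at hc
    have hsub : t ⊆ Finset.univ.filter (fun i => hM.eigenvalues i ≠ 0) :=
      fun i hi => Finset.mem_filter.2 ⟨Finset.mem_univ _, hc i hi⟩
    have := Finset.card_le_card hsub
    omega
  exact Finset.prod_eq_zero hit hi0

lemma charP_coeff_pos {m r : ℕ} {M : Matrix (Fin m) (Fin m) ℝ} (hM : M.IsHermitian)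
    (hnonneg : ∀ i, 0 ≤ hM.eigenvalues i) (hrank : r ≤ M.rank)
    {k : ℕ} (h1 : m - r ≤ k) (h2 : k ≤ m) :
    0 < (∏ i, (X + C (hM.eigenvalues i))).coeff k := by
  rw [Finset.prod_X_add_C_coeff _ _ (by simpa using h2)]
  have hfil : m - k ≤ (Finset.univ.filter fun i => hM.eigenvalues i ≠ 0).card := by
    have := hM.rank_eq_card_non_zero_eigs
    rw [Fintype.card_subtype] at this
    omega
  obtain ⟨t, hts, htc⟩ := Finset.exists_subset_card_eq hfil
  refine Finset.sum_pos' (fun s _ => Finset.prod_nonneg fun i _ => hnonneg i) ?_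
  refine ⟨t, Finset.mem_powersetCard.2 ⟨Finset.subset_univ t, by simpa using htc⟩, ?_⟩
  exact Finset.prod_pos fun i hi =>
    lt_of_le_of_ne (hnonneg i) (Ne.symm ((Finset.mem_filter.1 (hts hi)).2))

lemma charP_monic' {m : ℕ} (ev : Fin m → ℝ) :
    (∏ i, (X + C (ev i))).Monic :=
  monic_prod_of_monic _ _ fun i _ => monic_X_add_C _

lemma charP_natDegree' {m : ℕ} (ev : Fin m → ℝ) :
    (∏ i, (X + C (ev i))).natDegree = m := by
  rw [natDegree_prod_of_monic _ _ fun i _ => monic_X_add_C _]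
  simp [natDegree_X_add_C]

lemma eigenvalues_nonneg_of_coeffs {m : ℕ} {M : Matrix (Fin m) (Fin m) ℝ} (hM : M.IsHermitian)
    (h : ∀ k, k < m → 0 ≤ (∏ i, (X + C (hM.eigenvalues i))).coeff k) :
    ∀ i, 0 ≤ hM.eigenvalues i := by
  by_contra h'
  push_neg at h'
  obtain ⟨j, hj⟩ := h'
  have heval : (∏ i, (X + C (hM.eigenvalues i))).eval (-hM.eigenvalues j) = 0 := by
    rw [eval_prod]
    exact Finset.prod_eq_zero (Finset.mem_univ j) (by simp)
  have ht : (0:ℝ) < -hM.eigenvalues j := by linarith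
  have hcm : (∏ i, (X + C (hM.eigenvalues i))).coeff m = 1 := by
    have := (charP_monic' hM.eigenvalues).coeff_natDegree
    rwa [charP_natDegree'] at this
  have hpos : 0 < (∏ i, (X + C (hM.eigenvalues i))).eval (-hM.eigenvalues j) := by
    rw [eval_eq_sum_range' (n := m+1) (by rw [charP_natDegree']; exact Nat.lt_succ_self m)]
    refine Finset.sum_pos' (fun k hk => ?_) ⟨m, Finset.self_mem_range_succ m, ?_⟩
    · rcases lt_or_ge k m with hkm | hkm
      · exact mul_nonneg (h k hkm) (pow_nonneg ht.le k)
      · have hkm' : k = m := by rw [Finset.mem_range] at hk; omega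
        rw [hkm', hcm]
        positivity
    · rw [hcm]
      positivity
  linarith [heval, hpos]

lemma isHermitian_of_isSymm {m : ℕ} {M : Matrix (Fin m) (Fin m) ℝ} (h : M.IsSymm) :
    M.IsHermitian := by
  rw [Matrix.IsHermitian, Matrix.conjTranspose_eq_transpose_of_trivial]
  exact h

end Aux

open Matrix

theorem connected_component_min_rank_constant_rank
    (n m : ℕ) (A0 : Matrix (Fin m) (Fin m) ℝ) (A : Fin n → Matrix (Fin m) (Fin m) ℝ)
    (hA0 : A0.IsSymm) (hA : ∀ i, (A i).IsSymm)
    (S : Set (Fin n → ℝ))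
    (hS : S = {x | (A0 + ∑ i, x i • A i).PosSemidef})
    (hSne : S.Nonempty)
    (r : ℕ) (hr : IsLeast {k | ∃ x ∈ S, (A0 + ∑ i, x i • A i).rank = k} r)
    (D : Set (Fin n → ℝ)) (hD : D = {x | (A0 + ∑ i, x i • A i).rank ≤ r})
    (C : Set (Fin n → ℝ)) (hC : ∃ x ∈ D, C = connectedComponentIn D x)
    (hCS : (C ∩ S).Nonempty) :
    ∀ x ∈ C, (A0 + ∑ i, x i • A i).rank = r := by
  set Mf : (Fin n → ℝ) → Matrix (Fin m) (Fin m) ℝ := fun x => A0 + ∑ i, x i • A i with hMf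
  have hHerm : ∀ x : Fin n → ℝ, (Mf x).IsHermitian := by
    intro x
    apply isHermitian_of_isSymm
    rw [Matrix.IsSymm, hMf]
    rw [Matrix.transpose_add, Matrix.transpose_sum, hA0.eq]
    congr 1
    exact Finset.sum_congr rfl fun i _ => by rw [Matrix.transpose_smul, (hA i).eq]
  have hMcont : Continuous Mf := by
    apply Continuous.add continuous_const
    exact continuous_finset_sum _ fun i _ => (continuous_apply i).smul continuous_const
  have hSclosed : IsClosed S := by
    have hSeq : S = ⋂ v : Fin m → ℝ, {x | 0 ≤ dotProduct (star v) (Mf x *ᵥ v)} := by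
      rw [hS]; ext x
      simp only [Set.mem_iInter, Set.mem_setOf_eq]
      exact ⟨fun h v => h.dotProduct_mulVec_nonneg v, fun h => .of_dotProduct_mulVec_nonneg (hHerm x) h⟩
    rw [hSeq]
    refine isClosed_iInter fun v => isClosed_le continuous_const ?_
    exact Continuous.dotProduct continuous_const (hMcont.matrix_mulVec continuous_const)
  set E : ℕ → (Fin n → ℝ) → ℝ := fun k x => ∑ j ∈ Finset.range (m+1),
      (Mf x + (j:ℝ) • 1).det *
        (Lagrange.basis (Finset.range (m+1)) (fun j : ℕ => (j:ℝ)) j).coeff k with hE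
  have hEcont : ∀ k, Continuous (E k) := fun k =>
    continuous_finset_sum _ fun j _ =>
      ((hMcont.add continuous_const).matrix_det).mul continuous_const
  have hEcoeff : ∀ (x : Fin n → ℝ) (k : ℕ),
      E k x = (∏ i, (Polynomial.X + Polynomial.C ((hHerm x).eigenvalues i))).coeff k :=
    fun x k => (coeff_eq_sum_det (hHerm x) k).symm
  have key : ∀ z ∈ S ∩ D, ∃ U : Set (Fin n → ℝ),
      IsOpen U ∧ z ∈ U ∧ ∀ y ∈ U, y ∈ D → (Mf y).PosSemidef := by
    intro z hz
    have hzPSD : (Mf z).PosSemidef := by have := hz.1; rwa [hS] at this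
    have hzrank : r ≤ (Mf z).rank := hr.2 ⟨z, hz.1, rfl⟩
    have hnn : ∀ i, 0 ≤ (hHerm z).eigenvalues i := fun i => hzPSD.eigenvalues_nonneg i
    refine ⟨⋂ k ∈ Finset.Ico (m - r) m, {y | 0 < E k y}, ?_, ?_, ?_⟩
    · exact isOpen_biInter_finset fun k _ => isOpen_lt continuous_const (hEcont k)
    · simp only [Set.mem_iInter, Set.mem_setOf_eq]
      intro k hk
      rw [Finset.mem_Ico] at hk
      rw [hEcoeff]
      exact charP_coeff_pos (hHerm z) hnn hzrank hk.1 hk.2.le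
    · intro y hyU hyD
      rw [hD] at hyD
      apply (hHerm y).posSemidef_iff_eigenvalues_nonneg.mpr
      apply eigenvalues_nonneg_of_coeffs (hHerm y)
      intro k hkm
      rcases lt_or_ge k (m - r) with hkr | hkr
      · rw [charP_coeff_zero (hHerm y) hyD hkr]
      · have hpos : 0 < E k y := by
          simp only [Set.mem_iInter, Set.mem_setOf_eq] at hyU
          exact hyU k (Finset.mem_Ico.2 ⟨hkr, hkm⟩)
        rw [hEcoeff] at hpos
        exact hpos.le
  obtain ⟨x₀, hx₀D, hCeq⟩ := hC
  have hCD : C ⊆ D := hCeq ▸ connectedComponentIn_subset D x₀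
  have hCpre : IsPreconnected C := hCeq ▸ isPreconnected_connectedComponentIn
  have hCsubS : C ⊆ S := by
    by_contra hns
    rw [Set.not_subset] at hns
    obtain ⟨w, hwC, hwS⟩ := hns
    choose U hUopen hUmem hUpsd using key
    set u : Set (Fin n → ℝ) := ⋃ (z : Fin n → ℝ) (hz : z ∈ S ∩ D), U z hz with hu
    have huopen : IsOpen u := isOpen_iUnion fun z => isOpen_iUnion fun hz => hUopen z hz
    have hcover : C ⊆ u ∪ Sᶜ := by
      intro y hy
      by_cases hyS : y ∈ S
      · exact Or.inl (Set.mem_iUnion.2 ⟨y, Set.mem_iUnion.2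
          ⟨⟨hyS, hCD hy⟩, hUmem y ⟨hyS, hCD hy⟩⟩⟩)
      · exact Or.inr hyS
    obtain ⟨p, hpC, hpS⟩ := hCS
    have h1 : (C ∩ u).Nonempty := ⟨p, hpC, Set.mem_iUnion.2 ⟨p, Set.mem_iUnion.2
      ⟨⟨hpS, hCD hpC⟩, hUmem p ⟨hpS, hCD hpC⟩⟩⟩⟩
    have h2 : (C ∩ Sᶜ).Nonempty := ⟨w, hwC, hwS⟩
    obtain ⟨q, hqC, hq⟩ := hCpre u Sᶜ huopen hSclosed.isOpen_compl hcover h1 h2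
    obtain ⟨z, hz⟩ := Set.mem_iUnion.1 hq.1
    obtain ⟨hzmem, hqU⟩ := Set.mem_iUnion.1 hz
    have hqPSD : (Mf q).PosSemidef := hUpsd z hzmem q hqU (hCD hqC)
    exact hq.2 (by rw [hS]; exact hqPSD)
  intro x hx
  refine le_antisymm ?_ (hr.2 ⟨x, hCsubS hx, rfl⟩)
  have := hCD hx
  rwa [hD] at this
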